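/- Let G be a directed acyclic graph with vertex set V, and let A be its adjacency matrix where A_{uv} counts the number of distinct directed paths from u to v (with A_{uu} interpreted via the empty path convention, i.e., the path-count matrix is (I - M)^{-1} where M is the 0/1 adjacency matrix). After inserting a new edge (x,y), the number of paths from u to v in the new graph equals A_{uv} + A_{ux} · A_{yv}, provided the new graph remains acyclic. -/

import Mathlib

/-- `IsPathOn E u v l` : `u :: l` is the vertex sequence of a directed path
from `u` to `v` in the graph `E` (the path is empty iff `l = []`, in which
case `u = v`). -/
def IsPathOn {V : Type*} (E : V → V → Prop) (u v : V) (l : List V) : Prop :=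
  List.Chain E u l ∧ (u :: l).getLast? = some v

/-- Number of directed paths from `u` to `v`, including the empty path when
`u = v` (so this is the entry of `(I - M)⁻¹` for the 0/1 adjacency matrix
`M`). -/
noncomputable def rpathCount {V : Type*} (E : V → V → Prop) (u v : V) : ℕ :=
  Set.ncard {l : List V | IsPathOn E u v l}

section Aux

variable {V : Type*}

/-- In an acyclic graph, any chain has no duplicate vertices. -/
lemma aux_chain'_nodup {R : V → V → Prop} (hacyc : ¬ ∃ v, Relation.TransGen R v v)
    {L : List V} (h : L.Chain' R) : L.Nodup := by
  by_contra hn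
  obtain ⟨a, ha⟩ := List.exists_duplicate_iff_not_nodup.2 hn
  have hs : List.Sublist [a, a] L := List.duplicate_iff_sublist.1 ha
  have h2 : L.Chain' (Relation.TransGen R) :=
    List.IsChain.imp (fun _ _ => Relation.TransGen.single) h
  exact hacyc ⟨a, by simpa using List.IsChain.sublist h2 hs⟩

lemma aux_paths_finite [Fintype V] {E : V → V → Prop}
    (hacyc : ¬ ∃ v, Relation.TransGen E v v) (u v : V) :
    {l : List V | IsPathOn E u v l}.Finite := by
  apply (List.finite_length_le V (Fintype.card V)).subset
  intro l hl
  have hnd : (u :: l).Nodup := aux_chain'_nodup hacyc hl.1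
  have := hnd.length_le_card
  simpa using Nat.le_of_succ_le (by simpa using this)

/-- A chain in the extended graph not visiting `y` is a chain in `E`. -/
lemma aux_chain_restrict {E : V → V → Prop} {x y : V} :
    ∀ {a : V} {m : List V}, List.Chain (fun a b => E a b ∨ (a = x ∧ b = y)) a m →
      y ∉ m → List.Chain E a m
  | _, [], _, _ => List.Chain.nil
  | a, b :: m, h, hy => by
    simp only [List.Chain, List.chain_cons] at h ⊢
    refine ⟨h.1.resolve_right fun hc => hy (by simp [hc.2]), ?_⟩
    exact aux_chain_restrict h.2 (fun hc => hy (List.mem_cons_of_mem _ hc))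

/-- The last step of a chain ending with `b`. -/
lemma aux_chain_concat {R : V → V → Prop} {a b : V} {p : List V} :
    List.Chain R a (p ++ [b]) ↔ List.Chain R a p ∧ ∀ c ∈ (a :: p).getLast?, R c b := by
  have : (a :: (p ++ [b])) = (a :: p) ++ [b] := by simp
  constructor
  · intro h
    have h' : ((a :: p) ++ [b]).Chain' R := by rw [← this]; exact h
    obtain ⟨h1, _, h3⟩ := List.isChain_append.1 h'
    exact ⟨h1, fun c hc => h3 c hc b rfl⟩
  · intro ⟨h1, h2⟩
    show (a :: (p ++ [b])).Chain' R
    rw [this]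
    exact List.isChain_append.2 ⟨h1, by simp, fun c hc d hd => by simp at hd; subst hd; exact h2 c hc⟩

lemma aux_chain_glue {R : V → V → Prop} {u x y : V} {p q : List V}
    (hp : List.Chain R u p) (hx : (u :: p).getLast? = some x) (hR : R x y)
    (hq : List.Chain R y q) : List.Chain R u (p ++ y :: q) := by
  simp only [List.Chain]; rw [List.isChain_cons_split]
  refine ⟨aux_chain_concat.2 ⟨hp, fun c hc => ?_⟩, hq⟩
  rw [hx] at hc; simp at hc; subst hc; exact hR

lemma aux_chain_last_step {R : V → V → Prop} {u x y : V} {p q : List V}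
    (h : List.Chain R u (p ++ y :: q)) (hx : (u :: p).getLast? = some x) : R x y := by
  simp only [List.Chain] at h; rw [List.isChain_cons_split] at h
  exact (aux_chain_concat.1 h.1).2 x (by rw [hx]; simp)

/-- Split a chain in the extended graph which is not a chain in `E` at an
occurrence of the new edge. -/
lemma aux_split {E : V → V → Prop} {x y : V} :
    ∀ {u : V} {l : List V}, List.Chain (fun a b => E a b ∨ (a = x ∧ b = y)) u l →
      ¬ List.Chain E u l →
      ∃ p q, l = p ++ y :: q ∧ (u :: p).getLast? = some x ∧
        List.Chain (fun a b => E a b ∨ (a = x ∧ b = y)) u p ∧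
        List.Chain (fun a b => E a b ∨ (a = x ∧ b = y)) y q
  | u, [], _, hn => absurd List.Chain.nil hn
  | u, b :: m, h, hn => by
    simp only [List.Chain, List.chain_cons] at h
    by_cases hub : E u b
    · have hnm : ¬ List.Chain E b m := fun hc => hn (List.chain_cons.2 ⟨hub, hc⟩)
      obtain ⟨p, q, h1, h2, h3, h4⟩ := aux_split h.2 hnm
      exact ⟨b :: p, q, by simp [h1], by simpa using h2,
        List.chain_cons.2 ⟨Or.inl hub, h3⟩, h4⟩
    · obtain ⟨hux, hby⟩ := h.1.resolve_left hub
      subst hux; subst hby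
      exact ⟨[], m, rfl, rfl, List.Chain.nil, h.2⟩

/-- Splitting a list at a single occurrence of `a` is unique. -/
lemma aux_unique_split {a : V} :
    ∀ {p p' q q' : List V}, p ++ a :: q = p' ++ a :: q' → a ∉ p → a ∉ p' →
      p = p' ∧ q = q'
  | [], [], _, _, h, _, _ => by simpa using h
  | [], b' :: t', _, _, h, _, hp' => by
    simp at h; exact absurd (h.1 ▸ List.mem_cons_self) hp'
  | b :: t, [], _, _, h, hp, _ => by
    simp at h; exact absurd (h.1 ▸ List.mem_cons_self) hp
  | b :: t, b' :: t', q, q', h, hp, hp' => by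
    simp only [List.cons_append, List.cons.injEq] at h
    obtain ⟨h1, h2⟩ := aux_unique_split h.2 (fun hc => hp (List.mem_cons_of_mem _ hc))
      (fun hc => hp' (List.mem_cons_of_mem _ hc))
    exact ⟨by rw [h.1, h1], h2⟩

lemma aux_ncard_prod {α β : Type*} (A : Set α) (B : Set β) :
    (A ×ˢ B).ncard = A.ncard * B.ncard := by
  rw [← Nat.card_coe_set_eq, ← Nat.card_coe_set_eq, ← Nat.card_coe_set_eq,
      Nat.card_congr (Equiv.Set.prod A B), Nat.card_prod]

end Aux

/-- In a finite DAG with path-count matrix `A` (empty-path convention),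
after inserting a new edge `(x,y)` such that the graph stays acyclic, the
number of paths from `u` to `v` becomes `A u v + A u x * A y v`. -/
theorem stmt_2 {V : Type*} [Fintype V] (E : V → V → Prop) (x y : V)
    (hxy : ¬ E x y)
    (hacyc : ¬ ∃ v, Relation.TransGen E v v)
    (hacyc' : ¬ ∃ v, Relation.TransGen (fun a b => E a b ∨ (a = x ∧ b = y)) v v)
    (u v : V) :
    rpathCount (fun a b => E a b ∨ (a = x ∧ b = y)) u v =
      rpathCount E u v + rpathCount E u x * rpathCount E y v := by
  set E' : V → V → Prop := fun a b => E a b ∨ (a = x ∧ b = y) with hE'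
  set f : List V × List V → List V := fun pq => pq.1 ++ y :: pq.2 with hf
  set T : Set (List V × List V) :=
    {p | IsPathOn E u x p} ×ˢ {q | IsPathOn E y v q} with hT
  -- the set of new paths splits
  have hset : {l : List V | IsPathOn E' u v l} = {l | IsPathOn E u v l} ∪ f '' T := by
    ext l
    simp only [Set.mem_setOf_eq, Set.mem_union, Set.mem_image, hT, Set.mem_prod]
    constructor
    · rintro ⟨hc, hv⟩
      by_cases hEc : List.Chain E u l
      · exact Or.inl ⟨hEc, hv⟩
      · obtain ⟨p, q, hl, hx', hcp, hcq⟩ := aux_split hc hEc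
        subst hl
        have hnd : (u :: (p ++ y :: q)).Nodup := aux_chain'_nodup hacyc' hc
        have hnd' : ((u :: p) ++ y :: q).Nodup := by simpa using hnd
        have hyp : y ∉ u :: p := fun hyp =>
          (List.nodup_append.1 hnd').2.2 y hyp y List.mem_cons_self rfl
        have hyq : y ∉ q := by
          have := ((List.nodup_append.1 hnd').2.1 : (y :: q).Nodup)
          exact (List.nodup_cons.1 this).1
        refine Or.inr ⟨(p, q), ⟨⟨?_, hx'⟩, ⟨?_, ?_⟩⟩, rfl⟩
        · exact aux_chain_restrict hcp (fun hc' => hyp (List.mem_cons_of_mem _ hc'))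
        · exact aux_chain_restrict hcq hyq
        · rw [show (u :: (p ++ y :: q)) = (u :: p) ++ (y :: q) by simp,
            List.getLast?_append_of_ne_nil _ (by simp)] at hv
          exact hv
    · rintro (⟨hc, hv⟩ | ⟨⟨p, q⟩, ⟨⟨hcp, hpx⟩, ⟨hcq, hqv⟩⟩, rfl⟩)
      · exact ⟨List.IsChain.imp (fun _ _ h => Or.inl h) hc, hv⟩
      · refine ⟨aux_chain_glue (List.IsChain.imp (fun _ _ h => Or.inl h) hcp) hpx
          (Or.inr ⟨rfl, rfl⟩) (List.IsChain.imp (fun _ _ h => Or.inl h) hcq), ?_⟩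
        show (u :: (p ++ y :: q)).getLast? = some v
        rw [show (u :: (p ++ y :: q)) = (u :: p) ++ (y :: q) by simp,
          List.getLast?_append_of_ne_nil _ (by simp)]
        exact hqv
  -- disjointness
  have hdisj : Disjoint {l : List V | IsPathOn E u v l} (f '' T) := by
    rw [Set.disjoint_left]
    rintro l ⟨hc, -⟩ ⟨⟨p, q⟩, ⟨⟨-, hpx⟩, -⟩, rfl⟩
    exact hxy (aux_chain_last_step hc hpx)
  -- injectivity on T
  have hinj : Set.InjOn f T := by
    rintro ⟨p, q⟩ ⟨⟨hcp, hpx⟩, ⟨hcq, -⟩⟩ ⟨p', q'⟩ ⟨⟨hcp', hpx'⟩, ⟨hcq', -⟩⟩ heq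
    simp only [hf] at heq
    have hch : List.Chain E' u (p ++ y :: q) :=
      aux_chain_glue (List.IsChain.imp (fun _ _ h => Or.inl h) hcp) hpx
        (Or.inr ⟨rfl, rfl⟩) (List.IsChain.imp (fun _ _ h => Or.inl h) hcq)
    have hnd : (u :: (p ++ y :: q)).Nodup := aux_chain'_nodup hacyc' hch
    have hch' : List.Chain E' u (p' ++ y :: q') :=
      aux_chain_glue (List.IsChain.imp (fun _ _ h => Or.inl h) hcp') hpx'
        (Or.inr ⟨rfl, rfl⟩) (List.IsChain.imp (fun _ _ h => Or.inl h) hcq')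
    have hnd' : (u :: (p' ++ y :: q')).Nodup := aux_chain'_nodup hacyc' hch'
    have hyp : y ∉ p := by
      have : ((u :: p) ++ y :: q).Nodup := by simpa using hnd
      intro hyp
      exact (List.nodup_append.1 this).2.2 y
        (List.mem_cons_of_mem _ hyp) y List.mem_cons_self rfl
    have hyp' : y ∉ p' := by
      have : ((u :: p') ++ y :: q').Nodup := by simpa using hnd'
      intro hyp
      exact (List.nodup_append.1 this).2.2 y
        (List.mem_cons_of_mem _ hyp) y List.mem_cons_self rfl
    obtain ⟨h1, h2⟩ := aux_unique_split heq hyp hyp'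
    simp [h1, h2]
  -- finiteness
  have hfin0 : {l : List V | IsPathOn E u v l}.Finite := aux_paths_finite hacyc u v
  have hfinT : T.Finite := (aux_paths_finite hacyc u x).prod (aux_paths_finite hacyc y v)
  -- count
  rw [rpathCount, hset, Set.ncard_union_eq hdisj hfin0 (hfinT.image f),
    Set.ncard_image_of_injOn hinj, rpathCount, hT, aux_ncard_prod,
    rpathCount, rpathCount]
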